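/- Let V_x ∈ ℝ^{n'}, V_{x_r} ∈ ℝʳ be the blocks of the augmented value gradient V̂ = [V_x; V_{x_r}] at stage t+1, let F̂_x = [[F_x, 0],[0, I_r]] and F̂_u = [F_u; 0] be the augmented Jacobians, let ℓ_u ∈ ℝᵐ, and let Q_uu ∈ ℝ^{m×m} be symmetric invertible and M = V^{t+1}_{x x_r} ∈ ℝ^{n'×r}. Define Q̂_x̂ = F̂_xᵀ V̂, Q̂_u = F̂_uᵀ V̂ + ℓ_u, Q̂_ux̂ = [F_uᵀ V_xx F_x, F_uᵀ M]. Then the updated augmented value gradient Q̂_x̂ − Q̂_ux̂ᵀ Q_uu⁻¹ Q̂_u has blocks [Q_x + Q_xu k; V_{x_r} − Gᵀ Q_uu k], where Q_x = F_xᵀ V_x, Q_u = F_uᵀ V_x + ℓ_u, Q_xu = (F_uᵀ V_xx F_x)ᵀ, k = −Q_uu⁻¹ Q_u, and G = −Q_uu⁻¹ F_uᵀ M. -/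

import Mathlib

open Matrix

/-- Blocks of the updated augmented value gradient
Q̂_x̂ − Q̂_ux̂ᵀ Q_uu⁻¹ Q̂_u in GT-DDP on a residual-augmented system. -/
theorem gtddp_value_gradient_blocks {n npr r m : ℕ}
    (Vx : Fin npr → ℝ) (Vxr : Fin r → ℝ)
    (Vxx : Matrix (Fin npr) (Fin npr) ℝ)
    (M : Matrix (Fin npr) (Fin r) ℝ)
    (Fx : Matrix (Fin npr) (Fin n) ℝ) (Fu : Matrix (Fin npr) (Fin m) ℝ)
    (ℓu : Fin m → ℝ)
    (Quu : Matrix (Fin m) (Fin m) ℝ)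
    (hQuu : Quu.IsSymm) (hQuuInv : IsUnit Quu.det) :
    let Vhat : Fin npr ⊕ Fin r → ℝ := Sum.elim Vx Vxr
    let Fxhat : Matrix (Fin npr ⊕ Fin r) (Fin n ⊕ Fin r) ℝ :=
      fromBlocks Fx 0 0 1
    let Fuhat : Matrix (Fin npr ⊕ Fin r) (Fin m) ℝ :=
      Matrix.of fun i j => Sum.casesOn i (fun i1 => Fu i1 j) (fun _ => 0)
    let Qhx : Fin n ⊕ Fin r → ℝ := Fxhatᵀ *ᵥ Vhat
    let Qhu : Fin m → ℝ := Fuhatᵀ *ᵥ Vhat + ℓu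
    let Qhux : Matrix (Fin m) (Fin n ⊕ Fin r) ℝ :=
      Matrix.of fun i j => Sum.casesOn j (fun j1 => (Fuᵀ * Vxx * Fx) i j1)
        (fun j2 => (Fuᵀ * M) i j2)
    let Qx : Fin n → ℝ := Fxᵀ *ᵥ Vx
    let Qu : Fin m → ℝ := Fuᵀ *ᵥ Vx + ℓu
    let Qxu : Matrix (Fin n) (Fin m) ℝ := (Fuᵀ * Vxx * Fx)ᵀ
    let k : Fin m → ℝ := -(Quu⁻¹ *ᵥ Qu)
    let G : Matrix (Fin m) (Fin r) ℝ := -(Quu⁻¹ * (Fuᵀ * M))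
    Qhx - (Qhuxᵀ * Quu⁻¹) *ᵥ Qhu
      = Sum.elim (Qx + Qxu *ᵥ k) (Vxr - Gᵀ *ᵥ (Quu *ᵥ k)) := by
  intro Vhat Fxhat Fuhat Qhx Qhu Qhux Qx Qu Qxu k G
  -- identify the augmented pieces with block constructions
  have hFuhat : Fuhat = fromRows Fu 0 := by
    ext i j; cases i <;> rfl
  have hQhux : Qhux = fromCols (Fuᵀ * Vxx * Fx) (Fuᵀ * M) := by
    ext i j; cases j <;> rfl
  have hQhu : Qhu = Qu := by
    show Fuhatᵀ *ᵥ Vhat + ℓu = Fuᵀ *ᵥ Vx + ℓu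
    rw [hFuhat, transpose_fromRows]
    show fromCols Fuᵀ 0ᵀ *ᵥ Sum.elim Vx Vxr + ℓu = _
    rw [fromCols_mulVec_sumElim]
    simp
  have hQhx : Qhx = Sum.elim Qx Vxr := by
    show (fromBlocks Fx 0 0 (1 : Matrix (Fin r) (Fin r) ℝ))ᵀ *ᵥ Sum.elim Vx Vxr = _
    rw [fromBlocks_transpose, fromBlocks_mulVec]
    simp [Qx]
  have hinv : (Quu⁻¹)ᵀ = Quu⁻¹ := by
    rw [transpose_nonsing_inv, hQuu.eq]
  have hcancel : Quu *ᵥ (Quu⁻¹ *ᵥ Qu) = Qu := by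
    rw [mulVec_mulVec, mul_nonsing_inv Quu hQuuInv, one_mulVec]
  have hGt : Gᵀ *ᵥ (Quu *ᵥ k) = ((Fuᵀ * M)ᵀ * Quu⁻¹) *ᵥ Qu := by
    show (-(Quu⁻¹ * (Fuᵀ * M)))ᵀ *ᵥ (Quu *ᵥ -(Quu⁻¹ *ᵥ Qu)) = _
    rw [transpose_neg, neg_mulVec, mulVec_neg, hcancel, mulVec_neg, neg_neg,
      transpose_mul, hinv, ← mulVec_mulVec]
  rw [hQhx, hQhu, hQhux, transpose_fromCols, fromRows_mul, fromRows_mulVec, hGt]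
  funext x
  cases x with
  | inl i =>
    simp only [Sum.elim_inl, Pi.sub_apply, Pi.add_apply]
    have : (Qxu *ᵥ k) i = -((((Fuᵀ * Vxx * Fx)ᵀ * Quu⁻¹) *ᵥ Qu) i) := by
      show ((Fuᵀ * Vxx * Fx)ᵀ *ᵥ -(Quu⁻¹ *ᵥ Qu)) i = _
      rw [mulVec_neg, mulVec_mulVec]
      rfl
    rw [this]; ring
  | inr j =>
    simp
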